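/- Let S be a measurable space and let 𝓡 : S → P(M(S)) be a probability kernel. For μ ∈ M*(S), define R_μ ∈ P(M*(S)) as the mixture R_μ(B) = ∫_S Φ_μ(s)(B) d(μ/μ(S))(s), where Φ_μ(s) is the pushforward of 𝓡_s under ν ↦ μ + ν. Then μ ↦ R_μ is measurable from M*(S) to P(M*(S)); that is, R_• is a probability kernel from M*(S) to itself. -/

import Mathlib

open MeasureTheory ProbabilityTheory ENNReal

/-- `M*(S)`: the nonzero finite measures on `S`, with the σ-algebra induced by the
evaluation maps. -/
abbrev MStar (S : Type*) [MeasurableSpace S] := {μ : Measure S // IsFiniteMeasure μ ∧ μ ≠ 0}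

/-- The map `ν ↦ μ + ν` from `M(S)` to `M*(S)`, for a fixed `μ ∈ M*(S)`. -/
noncomputable def addMeas {S : Type*} [MeasurableSpace S] (μ : MStar S)
    (ν : {ν : Measure S // IsFiniteMeasure ν}) : MStar S :=
  ⟨μ.1 + ν.1,
    ⟨by have := μ.2.1; have := ν.2; infer_instance,
     by
      intro h
      have hle : μ.1 ≤ μ.1 + ν.1 := Measure.le_add_right le_rfl
      rw [h] at hle
      exact μ.2.2 (le_antisymm hle (Measure.zero_le _))⟩⟩

/-- `Φ_μ(s)`: the pushforward of `𝓡_s` under the map `ν ↦ μ + ν` from `M(S)` to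
`M*(S)`. -/
noncomputable def Phi {S : Type*} [MeasurableSpace S]
    (𝓡 : S → Measure {ν : Measure S // IsFiniteMeasure ν}) (μ : MStar S) (s : S) :
    Measure (MStar S) :=
  Measure.map (addMeas μ) (𝓡 s)

/-- One step of the measure-valued Pólya urn with random replacements given by the
probability kernel `𝓡 : S → P(M(S))`: `urnStepR 𝓡 μ` is the mixture
`B ↦ ∫_S Φ_μ(s)(B) d(μ/μ(S))(s)` of the measures `Φ_μ(s)` over `s ∼ μ/μ(S)`. -/
noncomputable def urnStepR {S : Type*} [MeasurableSpace S]
    (𝓡 : S → Measure {ν : Measure S // IsFiniteMeasure ν}) (μ : MStar S) :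
    Measure (MStar S) :=
  Measure.bind ((μ.1 Set.univ)⁻¹ • μ.1) (Phi 𝓡 μ)

/-- Lemma LR of the paper: for a measurable space `S` and a
probability kernel `𝓡 : S → P(M(S))`, the map `μ ↦ R_μ` sending `μ ∈ M*(S)` to the
mixture over `s ∼ μ/μ(S)` of the pushforwards of `𝓡_s` under `ν ↦ μ + ν` takes
values in the probability measures on `M*(S)` and is measurable, i.e. it is a
probability kernel from `M*(S)` to itself. -/
theorem urnStepR_isProbabilityKernel (S : Type*) [MeasurableSpace S]
    (𝓡 : S → Measure {ν : Measure S // IsFiniteMeasure ν})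
    (hmeas : Measurable 𝓡) (hprob : ∀ s, IsProbabilityMeasure (𝓡 s)) :
    (∀ μ : MStar S, IsProbabilityMeasure (urnStepR 𝓡 μ)) ∧ Measurable (urnStepR 𝓡) := by
  -- measurability of the evaluation on subtypes of measures
  have heval : ∀ {A : Set S}, MeasurableSet A →
      Measurable fun ν : {ν : Measure S // IsFiniteMeasure ν} => ν.1 A :=
    fun hA => (Measure.measurable_coe hA).comp measurable_subtype_coe
  have hevalStar : ∀ {A : Set S}, MeasurableSet A →
      Measurable fun μ : MStar S => μ.1 A :=
    fun hA => (Measure.measurable_coe hA).comp measurable_subtype_coe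
  -- `addMeas` is measurable in each variable and jointly
  have haddJoint : Measurable fun p : MStar S × {ν : Measure S // IsFiniteMeasure ν} =>
      addMeas p.1 p.2 := by
    apply Measurable.subtype_mk
    apply Measure.measurable_of_measurable_coe
    intro A hA
    simp only [addMeas, Measure.coe_add, Pi.add_apply]
    exact ((hevalStar hA).comp measurable_fst).add ((heval hA).comp measurable_snd)
  have hadd : ∀ μ : MStar S, Measurable (addMeas μ) := fun μ =>
    haddJoint.comp (measurable_const.prodMk measurable_id)
  -- Phi is measurable in s for fixed μ
  have hPhiMeas : ∀ μ : MStar S, Measurable (Phi 𝓡 μ) := by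
    intro μ
    apply Measure.measurable_of_measurable_coe
    intro B hB
    simp only [Phi]
    have : (fun s => Measure.map (addMeas μ) (𝓡 s) B)
        = fun s => 𝓡 s (addMeas μ ⁻¹' B) := by
      funext s; exact Measure.map_apply (hadd μ) hB
    rw [this]
    exact (Measure.measurable_coe ((hadd μ) hB)).comp hmeas
  -- Phi μ s is a probability measure
  have hPhiProb : ∀ (μ : MStar S) (s : S), IsProbabilityMeasure (Phi 𝓡 μ s) := by
    intro μ s
    have := hprob s
    exact Measure.isProbabilityMeasure_map (hadd μ).aemeasurable
  -- the normalized kernel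
  have hnorm : ∀ μ : MStar S, ((μ.1 Set.univ)⁻¹ • μ.1) Set.univ = 1 := by
    intro μ
    have h0 : μ.1 Set.univ ≠ 0 := by
      intro h
      exact μ.2.2 (Measure.measure_univ_eq_zero.mp h)
    have hfin : μ.1 Set.univ ≠ ⊤ := μ.2.1.measure_univ_lt_top.ne
    simp [ENNReal.inv_mul_cancel h0 hfin]
  have hκmeas : Measurable fun μ : MStar S => (μ.1 Set.univ)⁻¹ • μ.1 := by
    apply Measure.measurable_of_measurable_coe
    intro A hA
    simp only [Measure.smul_apply, smul_eq_mul]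
    exact ((hevalStar MeasurableSet.univ).inv).mul (hevalStar hA)
  let κ : Kernel (MStar S) S := ⟨fun μ => (μ.1 Set.univ)⁻¹ • μ.1, hκmeas⟩
  haveI hκMarkov : IsMarkovKernel κ := ⟨fun μ => ⟨hnorm μ⟩⟩
  -- the apply formula
  have happly : ∀ (μ : MStar S) {B : Set (MStar S)}, MeasurableSet B →
      urnStepR 𝓡 μ B = ∫⁻ s, 𝓡 s (addMeas μ ⁻¹' B) ∂(κ μ) := by
    intro μ B hB
    rw [urnStepR, Measure.bind_apply hB (hPhiMeas μ).aemeasurable]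
    congr 1
    funext s
    exact Measure.map_apply (hadd μ) hB
  constructor
  · intro μ
    constructor
    rw [happly μ MeasurableSet.univ]
    have : ∀ s, 𝓡 s (addMeas μ ⁻¹' Set.univ) = 1 := by
      intro s
      simp [Set.preimage_univ, (hprob s).measure_univ]
    simp only [this, lintegral_one]
    exact hnorm μ
  · apply Measure.measurable_of_measurable_coe
    intro B hB
    have : (fun μ => urnStepR 𝓡 μ B) = fun μ => ∫⁻ s, 𝓡 s (addMeas μ ⁻¹' B) ∂(κ μ) := by
      funext μ; exact happly μ hB
    rw [this]
    -- joint measurability of (μ, s) ↦ 𝓡 s (addMeas μ ⁻¹' B)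
    let κ₂ : Kernel (MStar S × S) {ν : Measure S // IsFiniteMeasure ν} :=
      ⟨fun p => 𝓡 p.2, hmeas.comp measurable_snd⟩
    haveI hκ₂Markov : IsMarkovKernel κ₂ := ⟨fun p => hprob p.2⟩
    have hjoint : Measurable fun p : MStar S × S => 𝓡 p.2 (addMeas p.1 ⁻¹' B) := by
      have hrw : (fun p : MStar S × S => 𝓡 p.2 (addMeas p.1 ⁻¹' B))
          = fun p => ∫⁻ ν, B.indicator 1 (addMeas p.1 ν) ∂(κ₂ p) := by
        funext p
        have hfun : (fun ν => B.indicator (1 : MStar S → ℝ≥0∞) (addMeas p.1 ν))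
            = (addMeas p.1 ⁻¹' B).indicator 1 := by
          funext ν
          by_cases h : addMeas p.1 ν ∈ B
          · rw [Set.indicator_of_mem h, Set.indicator_of_mem (Set.mem_preimage.mpr h)]
            rfl
          · rw [Set.indicator_of_notMem h,
              Set.indicator_of_notMem (fun hc => h (Set.mem_preimage.mp hc))]
        rw [hfun]
        exact (lintegral_indicator_one ((hadd p.1) hB)).symm
      rw [hrw]
      apply Measurable.lintegral_kernel_prod_right
      have hind : Measurable (B.indicator (1 : MStar S → ℝ≥0∞)) :=
        measurable_one.indicator hB
      exact hind.comp (haddJoint.comp (((measurable_fst.comp measurable_fst)).prodMk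
        measurable_snd))
    exact Measurable.lintegral_kernel_prod_right
      (f := fun μ s => 𝓡 s (addMeas μ ⁻¹' B)) hjoint
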